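/- For all integers n ≥ 2 and m ≥ n, there exists a profile (v_1, …, v_n) of normalized, monotone, XOS valuations over G = {g_1, …, g_m}, with all of agent 1's marginal values in [0, 1] (i.e., 0 ≤ v_1(S ∪ {g}) − v_1(S) ≤ 1 for every S ⊆ G and g ∈ G \ S), such that the allocation A = (A_1, …, A_n) produced by Mechanism 2 (Round-Robin for general valuations) under truthful reporting satisfies v_1(A_2) − v_1(A_1) ≥ ⌈(m − 1)/n⌉ − 1. Hence the maximum envy of Mechanism 2's output can be of order Θ(m/n), so Mechanism 2 does not provide any meaningful fairness guarantee for XOS valuations as m grows. -/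

import Mathlib

/-- A valuation: normalized and monotone set function on goods. -/
def IsValuation {m : ℕ} (v : Finset (Fin m) → ℝ) : Prop :=
  v ∅ = 0 ∧ ∀ S T : Finset (Fin m), S ⊆ T → v S ≤ v T

def AdditiveVal {m : ℕ} (v : Finset (Fin m) → ℝ) : Prop :=
  ∀ S T : Finset (Fin m), Disjoint S T → v (S ∪ T) = v S + v T

def SubadditiveVal {m : ℕ} (v : Finset (Fin m) → ℝ) : Prop :=
  ∀ S T : Finset (Fin m), v (S ∪ T) ≤ v S + v T

def CancelableVal {m : ℕ} (v : Finset (Fin m) → ℝ) : Prop :=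
  ∀ S T : Finset (Fin m), ∀ g : Fin m, g ∉ S ∪ T → v (insert g S) > v (insert g T) → v S > v T

def SubmodularVal {m : ℕ} (v : Finset (Fin m) → ℝ) : Prop :=
  ∀ S T : Finset (Fin m), S ⊆ T → ∀ g : Fin m, g ∉ T →
    v (insert g T) - v T ≤ v (insert g S) - v S

def MultiplicativeVal {m : ℕ} (v : Finset (Fin m) → ℝ) : Prop :=
  (∀ g : Fin m, 1 ≤ v {g}) ∧ ∀ S : Finset (Fin m), S.Nonempty → v S = ∏ g ∈ S, v {g}

def XOSVal {m : ℕ} (v : Finset (Fin m) → ℝ) : Prop :=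
  ∃ (k : ℕ) (f : Fin (k + 1) → Finset (Fin m) → ℝ),
    (∀ j, AdditiveVal (f j)) ∧
    ∀ S : Finset (Fin m), (∃ j, v S = f j S) ∧ ∀ j, f j S ≤ v S

def IsAllocation {n m : ℕ} (A : Fin n → Finset (Fin m)) : Prop :=
  (∀ i j : Fin n, i ≠ j → Disjoint (A i) (A j)) ∧ ∀ g : Fin m, ∃ i, g ∈ A i

/-- `α`-EF1. -/
def EF1 {n m : ℕ} (α : ℝ) (v : Fin n → Finset (Fin m) → ℝ) (A : Fin n → Finset (Fin m)) : Prop :=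
  ∀ i j : Fin n, A j = ∅ ∨ ∃ g ∈ A j, α * v i (A j \ {g}) ≤ v i (A i)

/-- The remaining good maximizing `f`, ties broken in favor of the smallest index. -/
noncomputable def chooseFavorite {m : ℕ} (f : Fin m → ℝ) (S : Finset (Fin m))
    (h : S.Nonempty) : Fin m :=
  (S.filter fun g => ∀ h' ∈ S, f h' ≤ f g).min' (by
    obtain ⟨b, hb, hmax⟩ := S.exists_max_image f h
    exact ⟨b, Finset.mem_filter.mpr ⟨hb, hmax⟩⟩)

/-- The state (bundles, remaining goods) of round-robin after `k` stages, where at stage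
`k+1` the agent `k % n` picks a remaining good maximizing `score i (current bundle of i)`,
ties broken towards the smallest index. -/
noncomputable def rrState {n m : ℕ} (score : Fin n → Finset (Fin m) → Fin m → ℝ) :
    ℕ → (Fin n → Finset (Fin m)) × Finset (Fin m)
  | 0 => (fun _ => (∅ : Finset (Fin m)), Finset.univ)
  | k + 1 =>
      let st := rrState score k
      if hn : 0 < n then
        if h : st.2.Nonempty then
          let i : Fin n := ⟨k % n, Nat.mod_lt k hn⟩
          let g := chooseFavorite (score i (st.1 i)) st.2 h
          (Function.update st.1 i (insert g (st.1 i)), st.2.erase g)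
        else st
      else st

/-- Mechanism 1: Round-Robin where each agent picks a remaining good of largest value. -/
noncomputable def roundRobin1 {n m : ℕ} (v : Fin n → Finset (Fin m) → ℝ) :
    Fin n → Finset (Fin m) :=
  (rrState (fun i _ g => v i {g}) m).1

/-- Mechanism 2: Round-Robin where each agent picks a remaining good of largest
marginal value with respect to his current bundle. -/
noncomputable def roundRobin2 {n m : ℕ} (v : Fin n → Finset (Fin m) → ℝ) :
    Fin n → Finset (Fin m) :=
  (rrState (fun i A g => v i (insert g A) - v i A) m).1

noncomputable def expTransform {m : ℕ} (δ : ℝ) (v : Finset (Fin m) → ℝ) :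
    Finset (Fin m) → ℝ :=
  fun S => if S = ∅ then 0 else Real.exp (δ * v S)

def addVal {m : ℕ} (w : Fin m → ℝ) : Finset (Fin m) → ℝ := fun S => ∑ g ∈ S, w g

def Envies {n m : ℕ} (v : Fin n → Finset (Fin m) → ℝ) (A : Fin n → Finset (Fin m))
    (i j : Fin n) : Prop :=
  v i (A i) < v i (A j)

def Unenvied {n m : ℕ} (v : Fin n → Finset (Fin m) → ℝ) (A : Fin n → Finset (Fin m))
    (j : Fin n) : Prop :=
  ∀ i : Fin n, ¬ Envies v A i j

def EnvyCycleStep {n m : ℕ} (v : Fin n → Finset (Fin m) → ℝ)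
    (A A' : Fin n → Finset (Fin m)) : Prop :=
  ∃ σ : Equiv.Perm (Fin n), σ.IsCycle ∧ (∀ i, σ i ≠ i → Envies v A i (σ i)) ∧
    ∀ i, A' i = A (σ i)

def HasEnvyCycle {n m : ℕ} (v : Fin n → Finset (Fin m) → ℝ)
    (A : Fin n → Finset (Fin m)) : Prop :=
  ∃ σ : Equiv.Perm (Fin n), σ.IsCycle ∧ ∀ i, σ i ≠ i → Envies v A i (σ i)

def Eliminated {n m : ℕ} (v : Fin n → Finset (Fin m) → ℝ)
    (A B : Fin n → Finset (Fin m)) : Prop :=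
  Relation.ReflTransGen (EnvyCycleStep v) A B ∧ ¬ HasEnvyCycle v B

inductive EGP {n m : ℕ} (v : Fin n → Finset (Fin m) → ℝ) :
    ℕ → (Fin n → Finset (Fin m)) → Prop
  | init : EGP v 0 (fun _ => ∅)
  | step {k : ℕ} (hk : k < m) {A C : Fin n → Finset (Fin m)} (j : Fin n) :
      EGP v k A → Unenvied v A j → (∀ j' : Fin n, Unenvied v A j' → j ≤ j') →
      Eliminated v (Function.update A j (insert ⟨k, hk⟩ (A j))) C →
      EGP v (k + 1) C

inductive EGP2 {n m : ℕ} (v : Fin n → Finset (Fin m) → ℝ) :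
    ℕ → (Fin n → Finset (Fin m)) → Finset (Fin m) → Prop
  | init : EGP2 v 0 (fun _ => ∅) Finset.univ
  | step {k : ℕ} {A C : Fin n → Finset (Fin m)} {S : Finset (Fin m)} (j : Fin n) (g : Fin m) :
      EGP2 v k A S → Unenvied v A j → (∀ j' : Fin n, Unenvied v A j' → j ≤ j') →
      g ∈ S → (∀ h ∈ S, v j {h} ≤ v j {g}) → (∀ h ∈ S, v j {g} ≤ v j {h} → g ≤ h) →
      Eliminated v (Function.update A j (insert g (A j))) C →
      EGP2 v (k + 1) C (S.erase g)


noncomputable def myV0 (n : ℕ) {m : ℕ} (S : Finset (Fin m)) : ℝ :=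
  max ((S.filter (fun g : Fin m => g.val % n = 1)).card : ℝ) (if S = ∅ then 0 else 1)

noncomputable def myV (n : ℕ) {m : ℕ} (i : Fin n) (S : Finset (Fin m)) : ℝ :=
  if (i : ℕ) = 0 then myV0 n S else 0

lemma myV0_of_filter_empty {n m : ℕ} {A : Finset (Fin m)}
    (hA : A.filter (fun g : Fin m => g.val % n = 1) = ∅) :
    myV0 n A = if A = ∅ then 0 else 1 := by
  unfold myV0
  rw [hA]
  split <;> simp

lemma myV0_insert_of_filter_empty {n m : ℕ} {A : Finset (Fin m)} (g : Fin m)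
    (hA : A.filter (fun g : Fin m => g.val % n = 1) = ∅) :
    myV0 n (insert g A) = 1 := by
  unfold myV0
  have hsub : (insert g A).filter (fun g : Fin m => g.val % n = 1) ⊆ {g} := by
    rw [Finset.filter_insert]
    split
    · rw [hA]; simp
    · rw [hA]; simp
  have hcard : ((insert g A).filter (fun g : Fin m => g.val % n = 1)).card ≤ 1 := by
    simpa using Finset.card_le_card hsub
  rw [if_neg (Finset.insert_ne_empty g A)]
  rw [max_eq_right]
  exact_mod_cast hcard

lemma chooseFavorite_const {m : ℕ} (f : Fin m → ℝ) (S : Finset (Fin m)) (h : S.Nonempty)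
    (hf : ∀ a ∈ S, ∀ b ∈ S, f a = f b) : chooseFavorite f S h = S.min' h := by
  have hfs : S.filter (fun g => ∀ h' ∈ S, f h' ≤ f g) = S :=
    Finset.filter_true_of_mem fun g hg h' hh' => (hf h' hh' g hg).le
  unfold chooseFavorite
  congr 1

lemma myRun (n m : ℕ) (hn : 2 ≤ n) (k : ℕ) (hk : k ≤ m) :
    rrState (fun (i : Fin n) (A : Finset (Fin m)) (g : Fin m) =>
        myV n i (insert g A) - myV n i A) k =
      (fun i : Fin n => Finset.univ.filter (fun g : Fin m => g.val < k ∧ g.val % n = i.val),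
       Finset.univ.filter (fun g : Fin m => k ≤ g.val)) := by
  induction k with
  | zero =>
      rw [rrState]
      refine Prod.ext ?_ ?_
      · funext i; simp
      · simp
  | succ k ih =>
      have hk' : k < m := hk
      have hn0 : 0 < n := by omega
      rw [rrState, ih (by omega)]
      have hne : (Finset.univ.filter (fun g : Fin m => k ≤ g.val)).Nonempty :=
        ⟨⟨k, hk'⟩, by simp⟩
      rw [dif_pos hn0, dif_pos hne]
      set i : Fin n := ⟨k % n, Nat.mod_lt k hn0⟩ with hi
      set A : Finset (Fin m) :=
        Finset.univ.filter (fun g : Fin m => g.val < k ∧ g.val % n = i.val) with hA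
      -- score is constant on the remaining goods
      have hconst : ∀ a ∈ (Finset.univ.filter (fun g : Fin m => k ≤ g.val)),
          ∀ b ∈ (Finset.univ.filter (fun g : Fin m => k ≤ g.val)),
          myV n i (insert a A) - myV n i A = myV n i (insert b A) - myV n i A := by
        intro a _ b _
        by_cases h0 : (i : ℕ) = 0
        · have hfe : A.filter (fun g : Fin m => g.val % n = 1) = ∅ := by
            rw [Finset.filter_eq_empty_iff]
            intro g hg
            rw [hA, Finset.mem_filter] at hg
            omega
          simp only [myV, if_pos h0]
          rw [myV0_insert_of_filter_empty a hfe, myV0_insert_of_filter_empty b hfe]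
        · simp [myV, h0]
      have hmin : (Finset.univ.filter (fun g : Fin m => k ≤ g.val)).min' hne = ⟨k, hk'⟩ := by
        refine le_antisymm (Finset.min'_le _ _ (by simp)) (Finset.le_min' _ _ _ ?_)
        intro g hg
        rw [Finset.mem_filter] at hg
        exact hg.2
      dsimp only
      rw [chooseFavorite_const _ _ hne hconst, hmin]
      refine Prod.ext ?_ ?_
      · funext j
        dsimp only
        by_cases hji : j = i
        · subst hji
          rw [Function.update_self]
          ext g
          simp only [Finset.mem_insert, Finset.mem_filter, Finset.mem_univ, true_and]
          constructor
          · rintro (rfl | ⟨h1, h2⟩)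
            · exact ⟨by simp, by simp [hi]⟩
            · exact ⟨by omega, h2⟩
          · rintro ⟨h1, h2⟩
            rcases Nat.lt_succ_iff_lt_or_eq.mp h1 with h | h
            · exact Or.inr ⟨h, h2⟩
            · left; exact Fin.ext h
        · rw [Function.update_of_ne hji]
          ext g
          simp only [Finset.mem_filter, Finset.mem_univ, true_and]
          have hvals : j.val ≠ i.val := fun h => hji (Fin.ext h)
          constructor
          · rintro ⟨h1, h2⟩; exact ⟨by omega, h2⟩
          · rintro ⟨h1, h2⟩
            refine ⟨?_, h2⟩
            rcases Nat.lt_succ_iff_lt_or_eq.mp h1 with h | h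
            · exact h
            · exfalso; apply hvals; rw [← h2, h]
      · dsimp only
        ext g
        simp only [Finset.mem_erase, Finset.mem_filter, Finset.mem_univ, true_and]
        have : (g ≠ ⟨k, hk'⟩) ↔ g.val ≠ k := by
          constructor
          · intro h he; exact h (Fin.ext he)
          · intro h he; exact h (congrArg Fin.val he)
        rw [this]
        omega



lemma myV0_valuation (n m : ℕ) : IsValuation (myV0 n (m := m)) := by
  constructor
  · simp [myV0]
  · intro S T hST
    unfold myV0
    apply max_le_max
    · exact_mod_cast Finset.card_le_card (Finset.filter_subset_filter _ hST)
    · by_cases hS : S = ∅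
      · rw [if_pos hS]; split <;> norm_num
      · have hT : T ≠ ∅ := fun hT => hS (Finset.subset_empty.mp (by rw [hT] at hST; exact hST))
        rw [if_neg hS, if_neg hT]

lemma myV0_marginal (n m : ℕ) (S : Finset (Fin m)) (g : Fin m) (hg : g ∉ S) :
    0 ≤ myV0 n (insert g S) - myV0 n S ∧ myV0 n (insert g S) - myV0 n S ≤ 1 := by
  have hmono := (myV0_valuation n m).2 S (insert g S) (Finset.subset_insert g S)
  refine ⟨by linarith, ?_⟩
  have hc' : (((insert g S).filter (fun g : Fin m => g.val % n = 1)).card : ℝ) ≤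
      ((S.filter (fun g : Fin m => g.val % n = 1)).card : ℝ) + 1 := by
    rw [Finset.filter_insert]
    split
    · rw [Finset.card_insert_of_notMem (fun h => hg (Finset.mem_of_mem_filter _ h))]
      push_cast
      linarith
    · push_cast
      linarith
  have he' : (if insert g S = ∅ then (0:ℝ) else 1) ≤ (if S = ∅ then (0:ℝ) else 1) + 1 := by
    split <;> split <;> norm_num
  have : myV0 n (insert g S) ≤ myV0 n S + 1 := by
    unfold myV0
    rw [← max_add_add_right]
    exact max_le_max hc' he'
  linarith

lemma myV0_xos (n m : ℕ) : XOSVal (myV0 n (m := m)) := by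
  classical
  set w : Fin (m+1) → Fin m → ℝ := fun j g => if j.val = m then (if g.val % n = 1 then (1:ℝ) else 0)
      else (if g.val = j.val then 1 else 0) with hw
  have hwlast : ∀ (h : m < m + 1) (g : Fin m),
      w ⟨m, h⟩ g = if g.val % n = 1 then (1:ℝ) else 0 := fun h g => if_pos rfl
  have hwlt : ∀ (j : Fin (m+1)), j.val ≠ m → ∀ g : Fin m,
      w j g = if g.val = j.val then (1:ℝ) else 0 := fun j hj g => if_neg hj
  refine ⟨m, fun j S => ∑ g ∈ S, w j g, ?_, ?_⟩
  · intro j S T hdisj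
    exact Finset.sum_union hdisj
  · intro S
    have h0 : (0:ℝ) ≤ myV0 n S := by
      unfold myV0
      exact le_max_of_le_left (Nat.cast_nonneg _)
    constructor
    · by_cases hS : S = ∅
      · exact ⟨⟨m, Nat.lt_succ_self m⟩, by simp [hS, myV0]⟩
      · by_cases hc : 1 ≤ (S.filter (fun g : Fin m => g.val % n = 1)).card
        · refine ⟨⟨m, Nat.lt_succ_self m⟩, ?_⟩
          beta_reduce
          rw [Finset.sum_congr rfl (fun g _ => hwlast (Nat.lt_succ_self m) g), Finset.sum_boole]
          unfold myV0
          rw [if_neg hS, max_eq_left (by exact_mod_cast hc)]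
        · have hfe : S.filter (fun g : Fin m => g.val % n = 1) = ∅ := by
            rw [← Finset.card_eq_zero]; omega
          obtain ⟨g₀, hg₀⟩ := Finset.nonempty_iff_ne_empty.mpr hS
          refine ⟨⟨g₀.val, by omega⟩, ?_⟩
          have hj : (⟨g₀.val, by omega⟩ : Fin (m+1)).val ≠ m := by
            have := g₀.isLt; simp; omega
          beta_reduce
          rw [Finset.sum_congr rfl (fun g _ => hwlt _ hj g), Finset.sum_boole]
          have : S.filter (fun g : Fin m => g.val = g₀.val) = {g₀} := by
            ext g
            simp only [Finset.mem_filter, Finset.mem_singleton]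
            constructor
            · rintro ⟨_, h⟩; exact Fin.ext h
            · rintro rfl; exact ⟨hg₀, rfl⟩
          rw [this, myV0_of_filter_empty hfe, if_neg hS]
          simp
    · intro j
      by_cases hj : j.val = m
      · have hjj : j = ⟨m, Nat.lt_succ_self m⟩ := Fin.ext hj
        subst hjj
        beta_reduce
        rw [Finset.sum_congr rfl (fun g _ => hwlast (Nat.lt_succ_self m) g), Finset.sum_boole]
        exact le_max_left _ _
      · beta_reduce
        rw [Finset.sum_congr rfl (fun g _ => hwlt _ hj g), Finset.sum_boole]
        by_cases hS : S = ∅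
        · simp [hS, myV0]
        · have : (S.filter (fun g : Fin m => g.val = j.val)).card ≤ 1 := by
            apply Finset.card_le_one.mpr
            intro a ha b hb
            rw [Finset.mem_filter] at ha hb
            exact Fin.ext (ha.2.trans hb.2.symm)
          calc ((S.filter (fun g : Fin m => g.val = j.val)).card : ℝ) ≤ 1 := by exact_mod_cast this
            _ ≤ myV0 n S := by unfold myV0; rw [if_neg hS]; exact le_max_right _ _

lemma zero_valuation_xos (m : ℕ) : IsValuation (fun _ : Finset (Fin m) => (0:ℝ)) ∧
    XOSVal (fun _ : Finset (Fin m) => (0:ℝ)) := by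
  refine ⟨⟨rfl, fun _ _ _ => le_refl _⟩, 0, fun _ _ => 0, fun j S T _ => by norm_num, ?_⟩
  intro S
  exact ⟨⟨⟨0, Nat.lt_succ_self 0⟩, rfl⟩, fun _ => le_refl _⟩

/-- For all n ≥ 2 and m ≥ n there is an XOS profile, with all of agent 1's marginal
values in [0, 1], on which Mechanism 2 (run truthfully) produces an allocation `A` with
`v₁(A₂) − v₁(A₁) ≥ ⌈(m − 1)/n⌉ − 1`; so Round-Robin has maximum envy Θ(m/n) for XOS
valuations. -/
theorem roundRobin2_xos_envy {n m : ℕ} (hn : 2 ≤ n) (hm : n ≤ m) :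
    ∃ v : Fin n → Finset (Fin m) → ℝ,
      (∀ j, IsValuation (v j) ∧ XOSVal (v j)) ∧
      (∀ (S : Finset (Fin m)) (g : Fin m), g ∉ S →
        0 ≤ v ⟨0, by omega⟩ (insert g S) - v ⟨0, by omega⟩ S ∧
        v ⟨0, by omega⟩ (insert g S) - v ⟨0, by omega⟩ S ≤ 1) ∧
      ((((m - 1 + (n - 1)) / n : ℕ) : ℝ) - 1 ≤
        v ⟨0, by omega⟩ (roundRobin2 v ⟨1, by omega⟩) -
          v ⟨0, by omega⟩ (roundRobin2 v ⟨0, by omega⟩)) := by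
  have hm2 : 2 ≤ m := le_trans hn hm
  refine ⟨myV n, ?_, ?_, ?_⟩
  · intro j
    by_cases hj : (j : ℕ) = 0
    · have : myV n j = myV0 n (m := m) := by funext S; simp [myV, hj]
      rw [this]
      exact ⟨myV0_valuation n m, myV0_xos n m⟩
    · have : myV n j = fun _ : Finset (Fin m) => (0:ℝ) := by funext S; simp [myV, hj]
      rw [this]
      exact zero_valuation_xos m
  · intro S g hg
    have h0 : myV n (⟨0, by omega⟩ : Fin n) = myV0 n (m := m) := by
      funext S; simp [myV]
    rw [h0]
    exact myV0_marginal n m S g hg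
  · have h0 : myV n (⟨0, by omega⟩ : Fin n) = myV0 n (m := m) := by
      funext S; simp [myV]
    have hrr : roundRobin2 (myV n) =
        (fun i : Fin n => Finset.univ.filter (fun g : Fin m => g.val < m ∧ g.val % n = i.val)) := by
      show (rrState (fun (i : Fin n) (A : Finset (Fin m)) (g : Fin m) =>
          myV n i (insert g A) - myV n i A) m).1 = _
      rw [myRun n m hn m le_rfl]
    rw [h0, hrr]
    set A0 : Finset (Fin m) :=
      Finset.univ.filter (fun g : Fin m => g.val < m ∧ g.val % n = (⟨0, by omega⟩ : Fin n).val) with hA0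
    set A1 : Finset (Fin m) :=
      Finset.univ.filter (fun g : Fin m => g.val < m ∧ g.val % n = (⟨1, by omega⟩ : Fin n).val) with hA1
    have hA0v : myV0 n A0 = 1 := by
      have hfe : A0.filter (fun g : Fin m => g.val % n = 1) = ∅ := by
        rw [Finset.filter_eq_empty_iff]
        intro g hg
        rw [hA0, Finset.mem_filter] at hg
        have : g.val % n = 0 := hg.2.2
        omega
      rw [myV0_of_filter_empty hfe, if_neg]
      intro h
      have : (⟨0, by omega⟩ : Fin m) ∈ A0 := by
        rw [hA0, Finset.mem_filter]
        refine ⟨Finset.mem_univ _, ?_, ?_⟩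
        · simp
          omega
        · simp
      rw [h] at this
      exact absurd this (Finset.notMem_empty _)
    have hA1f : A1.filter (fun g : Fin m => g.val % n = 1) = A1 := by
      apply Finset.filter_true_of_mem
      intro g hg
      rw [hA1, Finset.mem_filter] at hg
      exact hg.2.2
    have hA1v : (A1.card : ℝ) ≤ myV0 n A1 := by
      unfold myV0
      rw [hA1f]
      exact le_max_left _ _
    -- cardinality bound
    have hq : (m - 1 + (n - 1)) / n = (m - 2) / n + 1 := by
      rw [show m - 1 + (n - 1) = (m - 2) + n by omega, Nat.add_div_right _ (by omega)]
    have hcard : (m - 1 + (n - 1)) / n ≤ A1.card := by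
      rw [← Finset.card_range ((m - 1 + (n - 1)) / n)]
      apply Finset.card_le_card_of_injOn
        (fun i => (⟨(1 + i * n) % m, Nat.mod_lt _ (by omega)⟩ : Fin m))
      · intro i hi
        rw [Finset.mem_coe, Finset.mem_range] at hi
        have hile : i ≤ (m - 2) / n := by omega
        have hlt : 1 + i * n < m := by
          have h1 : i * n ≤ ((m - 2) / n) * n := Nat.mul_le_mul_right n hile
          have h2 : ((m - 2) / n) * n ≤ m - 2 := Nat.div_mul_le_self _ _
          omega
        rw [Finset.mem_coe, hA1, Finset.mem_filter]
        refine ⟨Finset.mem_univ _, ?_, ?_⟩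
        · simp [Nat.mod_eq_of_lt hlt]; omega
        · show (1 + i * n) % m % n = 1
          rw [Nat.mod_eq_of_lt hlt, Nat.add_mul_mod_self_right, Nat.mod_eq_of_lt (by omega)]
      · intro i hi j hj hij
        rw [Finset.mem_coe, Finset.mem_range] at hi hj
        have hile : i ≤ (m - 2) / n := by omega
        have hjle : j ≤ (m - 2) / n := by omega
        have hlti : 1 + i * n < m := by
          have h1 : i * n ≤ ((m - 2) / n) * n := Nat.mul_le_mul_right n hile
          have h2 : ((m - 2) / n) * n ≤ m - 2 := Nat.div_mul_le_self _ _
          omega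
        have hltj : 1 + j * n < m := by
          have h1 : j * n ≤ ((m - 2) / n) * n := Nat.mul_le_mul_right n hjle
          have h2 : ((m - 2) / n) * n ≤ m - 2 := Nat.div_mul_le_self _ _
          omega
        have := congrArg Fin.val hij
        simp only [Nat.mod_eq_of_lt hlti, Nat.mod_eq_of_lt hltj] at this
        have : i * n = j * n := by omega
        exact Nat.eq_of_mul_eq_mul_right (by omega) this
    have : (((m - 1 + (n - 1)) / n : ℕ) : ℝ) ≤ (A1.card : ℝ) := by exact_mod_cast hcard
    linarith
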